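/- The graph mean field model has at most one stationary point: if s* and ŝ* are two stationary points of the ODE system ṡ_{k,i} = x_cλ(s_{k,i-1} − s_{k,i})·z_{k,i}(s) − μ(s_{k,i} − s_{k,i+1}) within the state space, then s* = ŝ*. -/

import Mathlib

open Finset Filter

/-- `zfun K p kbar s k i` is the quantity `z_{k,i+1}(s)` of the graph mean field model:
`(1/2) * Σ_{k'∈K} ((k'+k)/k̄) p(k') (s_{k',i} + s_{k',i+1})`. -/
noncomputable def zfun (K : Finset ℕ) (p : ℕ → ℝ) (kbar : ℝ) (s : ℕ → ℕ → ℝ) (k i : ℕ) : ℝ :=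
  (1/2) * ∑ k' ∈ K, (((k' : ℝ) + (k : ℝ)) / kbar) * p k' * (s k' i + s k' (i+1))

lemma zfun_nonneg (K : Finset ℕ) (p : ℕ → ℝ) (kbar : ℝ) (hp : ∀ k ∈ K, 0 ≤ p k)
    (hkpos : 0 < kbar) (u : ℕ → ℕ → ℝ) (hu : ∀ k' ∈ K, ∀ i, 0 ≤ u k' i) (k i : ℕ) :
    0 ≤ zfun K p kbar u k i := by
  unfold zfun
  have : (0:ℝ) ≤ ∑ k' ∈ K, (((k' : ℝ) + (k : ℝ)) / kbar) * p k' * (u k' i + u k' (i+1)) := by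
    apply Finset.sum_nonneg
    intro k' hk'
    have h1 : (0:ℝ) ≤ ((k' : ℝ) + (k : ℝ)) / kbar := by positivity
    have h2 := hu k' hk' i
    have h3 := hu k' hk' (i+1)
    have h4 := hp k' hk'
    have : (0:ℝ) ≤ u k' i + u k' (i+1) := by linarith
    exact mul_nonneg (mul_nonneg h1 h4) this
  linarith

lemma zfun_le (K : Finset ℕ) (p : ℕ → ℝ) (kbar : ℝ) (hp : ∀ k ∈ K, 0 ≤ p k)
    (hpsum : ∑ k ∈ K, p k = 1) (hkbar : kbar = ∑ k ∈ K, p k * (k : ℝ)) (hkpos : 0 < kbar)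
    (kmax : ℕ) (hkmax : ∀ k ∈ K, k ≤ kmax)
    (u : ℕ → ℕ → ℝ) (hu1 : ∀ k' ∈ K, ∀ i, u k' i ≤ 1) (hu0 : ∀ k' ∈ K, ∀ i, 0 ≤ u k' i)
    (k : ℕ) (hk : k ∈ K) (i : ℕ) :
    zfun K p kbar u k i ≤ 1 + (kmax : ℝ) / kbar := by
  unfold zfun
  have step1 : ∑ k' ∈ K, (((k' : ℝ) + (k : ℝ)) / kbar) * p k' * (u k' i + u k' (i+1))
      ≤ ∑ k' ∈ K, (((k' : ℝ) + (k : ℝ)) / kbar) * p k' * 2 := by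
    apply Finset.sum_le_sum
    intro k' hk'
    have h1 : (0:ℝ) ≤ ((k' : ℝ) + (k : ℝ)) / kbar := by positivity
    have h2 : u k' i + u k' (i+1) ≤ 2 := by
      have := hu1 k' hk' i; have := hu1 k' hk' (i+1); linarith
    exact mul_le_mul_of_nonneg_left h2 (mul_nonneg h1 (hp k' hk'))
  have step2 : ∑ k' ∈ K, (((k' : ℝ) + (k : ℝ)) / kbar) * p k' * 2
      = (2/kbar) * (∑ k' ∈ K, p k' * (k' : ℝ)) + (2*(k:ℝ)/kbar) * (∑ k' ∈ K, p k') := by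
    rw [Finset.mul_sum, Finset.mul_sum, ← Finset.sum_add_distrib]
    apply Finset.sum_congr rfl
    intro k' _
    field_simp
  rw [step2, hpsum, ← hkbar] at step1
  have hkk : (k:ℝ) ≤ (kmax:ℝ) := by exact_mod_cast hkmax k hk
  have key : (2/kbar) * kbar + (2*(k:ℝ)/kbar) * 1 = 2 * (1 + (k:ℝ)/kbar) := by
    field_simp
  rw [key] at step1
  have mono : 1 + (k:ℝ)/kbar ≤ 1 + (kmax:ℝ)/kbar := by
    have : (k:ℝ)/kbar ≤ (kmax:ℝ)/kbar := by gcongr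
    linarith
  nlinarith [step1]

lemma zfun_mono (K : Finset ℕ) (p : ℕ → ℝ) (kbar : ℝ) (hp : ∀ k ∈ K, 0 ≤ p k)
    (hkpos : 0 < kbar) (u v : ℕ → ℕ → ℝ) (huv : ∀ k' ∈ K, ∀ i, u k' i ≤ v k' i) (k i : ℕ) :
    zfun K p kbar u k i ≤ zfun K p kbar v k i := by
  unfold zfun
  have : ∑ k' ∈ K, (((k' : ℝ) + (k : ℝ)) / kbar) * p k' * (u k' i + u k' (i+1))
      ≤ ∑ k' ∈ K, (((k' : ℝ) + (k : ℝ)) / kbar) * p k' * (v k' i + v k' (i+1)) := by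
    apply Finset.sum_le_sum
    intro k' hk'
    have h1 : (0:ℝ) ≤ ((k' : ℝ) + (k : ℝ)) / kbar := by positivity
    have h2 : u k' i + u k' (i+1) ≤ v k' i + v k' (i+1) := by
      have := huv k' hk' i; have := huv k' hk' (i+1); linarith
    exact mul_le_mul_of_nonneg_left h2 (mul_nonneg h1 (hp k' hk'))
  linarith

lemma zfun_congr (K : Finset ℕ) (p : ℕ → ℝ) (kbar : ℝ)
    (u v : ℕ → ℕ → ℝ) (huv : ∀ k' ∈ K, ∀ i, p k' * u k' i = p k' * v k' i) (k i : ℕ) :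
    zfun K p kbar u k i = zfun K p kbar v k i := by
  unfold zfun
  congr 1
  apply Finset.sum_congr rfl
  intro k' hk'
  have e1 := huv k' hk' i
  have e2 := huv k' hk' (i+1)
  have : (((k' : ℝ) + (k : ℝ)) / kbar) * p k' * (u k' i + u k' (i+1))
      = (((k' : ℝ) + (k : ℝ)) / kbar) * (p k' * u k' i + p k' * u k' (i+1)) := by ring
  rw [this, e1, e2]
  ring

lemma key_alg (K : Finset ℕ) (p : ℕ → ℝ) (kbar xcl : ℝ) (x y : ℕ → ℝ) :
    ∑ k ∈ K, p k * (xcl * (x k - y k) *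
        ((1/2) * ∑ k' ∈ K, (((k' : ℝ) + (k : ℝ)) / kbar) * p k' * (x k' + y k')))
    = (xcl/kbar) * ((∑ k ∈ K, (k:ℝ) * p k * x k) * (∑ k ∈ K, p k * x k)
        - (∑ k ∈ K, (k:ℝ) * p k * y k) * (∑ k ∈ K, p k * y k)) := by
  have expand : ∀ k ∈ K, p k * (xcl * (x k - y k) *
        ((1/2) * ∑ k' ∈ K, (((k' : ℝ) + (k : ℝ)) / kbar) * p k' * (x k' + y k')))
      = (xcl/(2*kbar)) * ((p k * (x k - y k)) * (∑ k' ∈ K, (k':ℝ) * p k' * (x k' + y k'))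
          + ((k:ℝ) * p k * (x k - y k)) * (∑ k' ∈ K, p k' * (x k' + y k'))) := by
    intro k _
    have : ∑ k' ∈ K, (((k' : ℝ) + (k : ℝ)) / kbar) * p k' * (x k' + y k')
        = (1/kbar) * ((∑ k' ∈ K, (k':ℝ) * p k' * (x k' + y k'))
            + (k:ℝ) * ∑ k' ∈ K, p k' * (x k' + y k')) := by
      rw [Finset.mul_sum, ← Finset.sum_add_distrib, Finset.mul_sum]
      apply Finset.sum_congr rfl
      intro k' _
      field_simp
    rw [this]
    field_simp
  rw [Finset.sum_congr rfl expand, ← Finset.mul_sum, Finset.sum_add_distrib,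
    ← Finset.sum_mul, ← Finset.sum_mul]
  have eA : ∑ k ∈ K, p k * (x k - y k) = (∑ k ∈ K, p k * x k) - (∑ k ∈ K, p k * y k) := by
    rw [← Finset.sum_sub_distrib]; exact Finset.sum_congr rfl (fun k _ => by ring)
  have eB : ∑ k ∈ K, (k:ℝ) * p k * (x k - y k)
      = (∑ k ∈ K, (k:ℝ) * p k * x k) - (∑ k ∈ K, (k:ℝ) * p k * y k) := by
    rw [← Finset.sum_sub_distrib]; exact Finset.sum_congr rfl (fun k _ => by ring)
  have eC : ∑ k' ∈ K, (k':ℝ) * p k' * (x k' + y k')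
      = (∑ k ∈ K, (k:ℝ) * p k * x k) + (∑ k ∈ K, (k:ℝ) * p k * y k) := by
    rw [← Finset.sum_add_distrib]; exact Finset.sum_congr rfl (fun k _ => by ring)
  have eD : ∑ k' ∈ K, p k' * (x k' + y k')
      = (∑ k ∈ K, p k * x k) + (∑ k ∈ K, p k * y k) := by
    rw [← Finset.sum_add_distrib]; exact Finset.sum_congr rfl (fun k _ => by ring)
  rw [eA, eB, eC, eD]
  ring

lemma tendsto_nat_shift (φ : ℕ → ℕ) (hφ : ∀ n, n ≤ φ n) :
    Filter.Tendsto φ atTop atTop :=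
  tendsto_atTop_mono hφ tendsto_id

lemma moment_id (K : Finset ℕ) (p : ℕ → ℝ) (kbar xcl mu : ℝ)
    (u : ℕ → ℕ → ℝ)
    (hulim : ∀ k ∈ K, Filter.Tendsto (fun i => u k i) Filter.atTop (nhds 0))
    (hustat : ∀ k ∈ K, ∀ i : ℕ,
      xcl * (u k i - u k (i+1)) * zfun K p kbar u k i - mu * (u k (i+1) - u k (i+2)) = 0)
    (i : ℕ) :
    mu * (∑ k ∈ K, p k * u k (i+1))
      = (xcl/kbar) * ((∑ k ∈ K, (k:ℝ) * p k * u k i) * (∑ k ∈ K, p k * u k i)) := by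
  set seq : ℕ → ℝ := fun N => ∑ k ∈ K, p k *
    (∑ j ∈ Finset.range N, xcl * (u k (i+j) - u k (i+j+1)) * zfun K p kbar u k (i+j))
    with hseq
  have lim1 : Filter.Tendsto seq atTop
      (nhds (∑ k ∈ K, p k * (mu * (u k (i+1) - 0)))) := by
    have eq1 : ∀ N, seq N = ∑ k ∈ K, p k * (mu * (u k (i+1) - u k (i+N+1))) := by
      intro N
      apply Finset.sum_congr rfl
      intro k hk
      congr 1
      have hterm : ∀ j ∈ Finset.range N,
          xcl * (u k (i+j) - u k (i+j+1)) * zfun K p kbar u k (i+j)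
          = (fun j => mu * u k (i+j+1)) j - (fun j => mu * u k (i+j+1)) (j+1) := by
        intro j _
        have := hustat k hk (i+j)
        simp only []
        ring_nf
        ring_nf at this
        linarith
      rw [Finset.sum_congr rfl hterm, Finset.sum_range_sub' (f := fun j => mu * u k (i+j+1))]
      simp only [Nat.add_zero]
      ring
    apply Filter.Tendsto.congr (fun N => (eq1 N).symm)
    apply tendsto_finset_sum
    intro k hk
    apply Filter.Tendsto.const_mul
    apply Filter.Tendsto.const_mul
    apply Filter.Tendsto.const_sub
    exact (hulim k hk).comp (tendsto_nat_shift (fun N => i+N+1) (fun N => by show N ≤ i+N+1; omega))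
  have lim2 : Filter.Tendsto seq atTop
      (nhds ((xcl/kbar) * ((∑ k ∈ K, (k:ℝ) * p k * u k i) * (∑ k ∈ K, p k * u k i) - 0 * 0))) := by
    have eq2 : ∀ N, seq N = (xcl/kbar) * ((∑ k ∈ K, (k:ℝ) * p k * u k i) * (∑ k ∈ K, p k * u k i)
        - (∑ k ∈ K, (k:ℝ) * p k * u k (i+N)) * (∑ k ∈ K, p k * u k (i+N))) := by
      intro N
      have swap : seq N = ∑ j ∈ Finset.range N, ∑ k ∈ K,
          p k * (xcl * (u k (i+j) - u k (i+j+1)) * zfun K p kbar u k (i+j)) := by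
        rw [hseq]
        simp only [Finset.mul_sum]
        exact Finset.sum_comm
      rw [swap]
      have perj : ∀ j ∈ Finset.range N, ∑ k ∈ K,
          p k * (xcl * (u k (i+j) - u k (i+j+1)) * zfun K p kbar u k (i+j))
          = (fun j => (xcl/kbar) * ((∑ k ∈ K, (k:ℝ) * p k * u k (i+j)) * (∑ k ∈ K, p k * u k (i+j)))) j
            - (fun j => (xcl/kbar) * ((∑ k ∈ K, (k:ℝ) * p k * u k (i+j)) * (∑ k ∈ K, p k * u k (i+j)))) (j+1) := by
        intro j _
        have := key_alg K p kbar xcl (fun k => u k (i+j)) (fun k => u k (i+j+1))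
        simp only [zfun]
        rw [this]
        ring
      rw [Finset.sum_congr rfl perj, Finset.sum_range_sub']
      simp only [Nat.add_zero]
      ring
    apply Filter.Tendsto.congr (fun N => (eq2 N).symm)
    apply Filter.Tendsto.const_mul
    apply Filter.Tendsto.const_sub
    have hshift : ∀ k, k ∈ K → Filter.Tendsto (fun N => u k (i+N)) atTop (nhds 0) := by
      intro k hk
      exact (hulim k hk).comp (tendsto_nat_shift (fun N => i+N) (fun N => by show N ≤ i+N; omega))
    have hA : Filter.Tendsto (fun N => ∑ k ∈ K, (k:ℝ) * p k * u k (i+N)) atTop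
        (nhds (∑ k ∈ K, (0:ℝ))) := by
      apply tendsto_finset_sum
      intro k hk
      have h2 := (hshift k hk).const_mul ((k:ℝ) * p k)
      simpa [mul_assoc, mul_comm] using h2
    have hB : Filter.Tendsto (fun N => ∑ k ∈ K, p k * u k (i+N)) atTop
        (nhds (∑ k ∈ K, (0:ℝ))) := by
      apply tendsto_finset_sum
      intro k hk
      simpa using (hshift k hk).const_mul (p k)
    have := hA.mul hB
    simpa using this
  have := tendsto_nhds_unique lim1 lim2
  rw [Finset.mul_sum]
  rw [show (∑ k ∈ K, p k * (mu * (u k (i+1) - 0))) = ∑ k ∈ K, mu * (p k * u k (i+1)) from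
    Finset.sum_congr rfl (fun k _ => by ring)] at this
  rw [this]
  ring

lemma comparable_eq (K : Finset ℕ) (p : ℕ → ℝ) (hp : ∀ k ∈ K, 0 ≤ p k)
    (kbar xcl mu : ℝ) (hmu : 0 < mu)
    (u v : ℕ → ℕ → ℝ)
    (hu0 : ∀ k ∈ K, u k 0 = 1) (hv0 : ∀ k ∈ K, v k 0 = 1)
    (hulim : ∀ k ∈ K, Filter.Tendsto (fun i => u k i) Filter.atTop (nhds 0))
    (hvlim : ∀ k ∈ K, Filter.Tendsto (fun i => v k i) Filter.atTop (nhds 0))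
    (hustat : ∀ k ∈ K, ∀ i : ℕ,
      xcl * (u k i - u k (i+1)) * zfun K p kbar u k i - mu * (u k (i+1) - u k (i+2)) = 0)
    (hvstat : ∀ k ∈ K, ∀ i : ℕ,
      xcl * (v k i - v k (i+1)) * zfun K p kbar v k i - mu * (v k (i+1) - v k (i+2)) = 0)
    (huv : ∀ k ∈ K, ∀ i, u k i ≤ v k i) :
    ∀ k ∈ K, ∀ i, u k i = v k i := by
  -- p-weighted equality, by induction on the level
  have hw : ∀ n, ∀ k ∈ K, p k * u k n = p k * v k n := by
    intro n
    induction n with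
    | zero => intro k hk; rw [hu0 k hk, hv0 k hk]
    | succ n ih =>
      have hAu : (∑ k ∈ K, (k:ℝ) * p k * u k n) = (∑ k ∈ K, (k:ℝ) * p k * v k n) := by
        apply Finset.sum_congr rfl
        intro k hk
        have h := ih k hk
        have e1 : (k:ℝ) * p k * u k n = (k:ℝ) * (p k * u k n) := by ring
        have e2 : (k:ℝ) * p k * v k n = (k:ℝ) * (p k * v k n) := by ring
        rw [e1, e2, h]
      have hBu : (∑ k ∈ K, p k * u k n) = (∑ k ∈ K, p k * v k n) :=
        Finset.sum_congr rfl (fun k hk => ih k hk)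
      have e1 := moment_id K p kbar xcl mu u hulim hustat n
      have e2 := moment_id K p kbar xcl mu v hvlim hvstat n
      have hB1 : (∑ k ∈ K, p k * u k (n+1)) = (∑ k ∈ K, p k * v k (n+1)) := by
        apply mul_left_cancel₀ (ne_of_gt hmu)
        rw [e1, e2, hAu, hBu]
      have hz : ∑ k ∈ K, (p k * v k (n+1) - p k * u k (n+1)) = 0 := by
        rw [Finset.sum_sub_distrib, hB1]
        ring
      intro k hk
      have hnn : ∀ k ∈ K, 0 ≤ p k * v k (n+1) - p k * u k (n+1) := fun k hk =>
        sub_nonneg.mpr (mul_le_mul_of_nonneg_left (huv k hk (n+1)) (hp k hk))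
      have := (Finset.sum_eq_zero_iff_of_nonneg hnn).mp hz k hk
      linarith
  -- zfun agreement
  have hzf : ∀ k i, zfun K p kbar u k i = zfun K p kbar v k i :=
    fun k i => zfun_congr K p kbar u v (fun k' hk' i => hw i k' hk') k i
  intro k hk
  -- per-degree recursions with the common z
  have hrecu : ∀ i, mu * (u k (i+1) - u k (i+2))
      = xcl * (u k i - u k (i+1)) * zfun K p kbar u k i := by
    intro i; have := hustat k hk i; linarith
  have hrecv : ∀ i, mu * (v k (i+1) - v k (i+2))
      = xcl * (v k i - v k (i+1)) * zfun K p kbar u k i := by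
    intro i
    have h := hvstat k hk i
    rw [← hzf k i] at h
    linarith
  -- cross proportionality
  have cross : ∀ i, (v k 0 - v k 1) * (u k i - u k (i+1))
      = (u k 0 - u k 1) * (v k i - v k (i+1)) := by
    intro i
    induction i with
    | zero => ring
    | succ i ih =>
      apply mul_left_cancel₀ (ne_of_gt hmu)
      calc mu * ((v k 0 - v k 1) * (u k (i+1) - u k (i+1+1)))
          = (v k 0 - v k 1) * (mu * (u k (i+1) - u k (i+2))) := by ring
        _ = (v k 0 - v k 1) * (xcl * (u k i - u k (i+1)) * zfun K p kbar u k i) := by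
            rw [hrecu i]
        _ = (xcl * zfun K p kbar u k i) * ((v k 0 - v k 1) * (u k i - u k (i+1))) := by ring
        _ = (xcl * zfun K p kbar u k i) * ((u k 0 - u k 1) * (v k i - v k (i+1))) := by rw [ih]
        _ = (u k 0 - u k 1) * (xcl * (v k i - v k (i+1)) * zfun K p kbar u k i) := by ring
        _ = (u k 0 - u k 1) * (mu * (v k (i+1) - v k (i+2))) := by rw [← hrecv i]
        _ = mu * ((u k 0 - u k 1) * (v k (i+1) - v k (i+1+1))) := by ring
  -- partial sums tend to 1
  have limu : Filter.Tendsto (fun N => ∑ j ∈ Finset.range N, (u k j - u k (j+1)))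
      atTop (nhds 1) := by
    have eq : ∀ N, ∑ j ∈ Finset.range N, (u k j - u k (j+1)) = 1 - u k N := by
      intro N
      rw [Finset.sum_range_sub' (f := fun j => u k j), hu0 k hk]
    apply Filter.Tendsto.congr (fun N => (eq N).symm)
    have := Filter.Tendsto.const_sub (1:ℝ) (hulim k hk)
    simpa using this
  have limv : Filter.Tendsto (fun N => ∑ j ∈ Finset.range N, (v k j - v k (j+1)))
      atTop (nhds 1) := by
    have eq : ∀ N, ∑ j ∈ Finset.range N, (v k j - v k (j+1)) = 1 - v k N := by
      intro N
      rw [Finset.sum_range_sub' (f := fun j => v k j), hv0 k hk]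
    apply Filter.Tendsto.congr (fun N => (eq N).symm)
    have := Filter.Tendsto.const_sub (1:ℝ) (hvlim k hk)
    simpa using this
  -- first increments agree
  have hab : u k 0 - u k 1 = v k 0 - v k 1 := by
    have l1 : Filter.Tendsto (fun N => (v k 0 - v k 1) * ∑ j ∈ Finset.range N, (u k j - u k (j+1)))
        atTop (nhds ((v k 0 - v k 1) * 1)) := limu.const_mul _
    have l3 : Filter.Tendsto (fun N => (u k 0 - u k 1) * ∑ j ∈ Finset.range N, (v k j - v k (j+1)))
        atTop (nhds ((u k 0 - u k 1) * 1)) := limv.const_mul _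
    have leq : ∀ N, (v k 0 - v k 1) * ∑ j ∈ Finset.range N, (u k j - u k (j+1))
        = (u k 0 - u k 1) * ∑ j ∈ Finset.range N, (v k j - v k (j+1)) := by
      intro N
      rw [Finset.mul_sum, Finset.mul_sum]
      exact Finset.sum_congr rfl (fun j _ => cross j)
    have l1' := Filter.Tendsto.congr leq l1
    have := tendsto_nhds_unique l1' l3
    linarith [this]
  -- increments all agree
  have hαβ : ∀ i, u k i - u k (i+1) = v k i - v k (i+1) := by
    by_cases h0 : u k 0 - u k 1 = 0
    · exfalso
      have hall : ∀ i, u k i - u k (i+1) = 0 := by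
        intro i
        induction i with
        | zero => exact h0
        | succ i ih =>
          have h := hrecu i
          rw [ih] at h
          have : mu * (u k (i+1) - u k (i+2)) = 0 := by rw [h]; ring
          have := mul_eq_zero.mp this
          rcases this with h' | h'
          · exact absurd h' (ne_of_gt hmu)
          · exact h'
      have lz : Filter.Tendsto (fun N => ∑ j ∈ Finset.range N, (u k j - u k (j+1)))
          atTop (nhds 0) := by
        have : ∀ N, ∑ j ∈ Finset.range N, (u k j - u k (j+1)) = 0 := by
          intro N
          apply Finset.sum_eq_zero
          intro j _
          exact hall j
        apply Filter.Tendsto.congr (fun N => (this N).symm)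
        exact tendsto_const_nhds
      have := tendsto_nhds_unique limu lz
      norm_num at this
    · intro i
      have h := cross i
      rw [← hab] at h
      exact mul_left_cancel₀ h0 h
  intro i
  induction i with
  | zero => rw [hu0 k hk, hv0 k hk]
  | succ i ih =>
    have := hαβ i
    linarith

noncomputable def psi (K : Finset ℕ) (p : ℕ → ℝ) (kbar xcl mu hh : ℝ)
    (u : ℕ → ℕ → ℝ) : ℕ → ℕ → ℝ :=
  fun k i => match i with
  | 0 => 1
  | Nat.succ j => u k (j+1) + hh * (xcl * (u k j - u k (j+1)) * zfun K p kbar u k j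
      - mu * (u k (j+1) - u k (j+2)))

lemma psi_zero (K : Finset ℕ) (p : ℕ → ℝ) (kbar xcl mu hh : ℝ) (u : ℕ → ℕ → ℝ) (k : ℕ) :
    psi K p kbar xcl mu hh u k 0 = 1 := rfl

lemma psi_succ (K : Finset ℕ) (p : ℕ → ℝ) (kbar xcl mu hh : ℝ) (u : ℕ → ℕ → ℝ) (k j : ℕ) :
    psi K p kbar xcl mu hh u k (j+1) = u k (j+1) + hh * (xcl * (u k j - u k (j+1)) * zfun K p kbar u k j
      - mu * (u k (j+1) - u k (j+2))) := rfl

section PsiProps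

variable (K : Finset ℕ) (p : ℕ → ℝ) (kbar : ℝ) (xcl mu hh : ℝ) (kmax : ℕ)

lemma psi_nonneg (hp : ∀ k ∈ K, 0 ≤ p k) (hpsum : ∑ k ∈ K, p k = 1)
    (hkbar : kbar = ∑ k ∈ K, p k * (k : ℝ)) (hkpos : 0 < kbar)
    (hkmax : ∀ k ∈ K, k ≤ kmax)
    (hx : 0 < xcl) (hmu : 0 < mu) (hh0 : 0 ≤ hh)
    (hh1 : hh * (mu + xcl * (1 + (kmax:ℝ)/kbar)) ≤ 1)
    (u : ℕ → ℕ → ℝ)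
    (humono : ∀ k ∈ K, ∀ i, u k (i+1) ≤ u k i)
    (hunn : ∀ k ∈ K, ∀ i, 0 ≤ u k i)
    (hule1 : ∀ k ∈ K, ∀ i, u k i ≤ 1) :
    ∀ k ∈ K, ∀ i, 0 ≤ psi K p kbar xcl mu hh u k i := by
  intro k hk i
  match i with
  | 0 => norm_num [psi_zero]
  | Nat.succ j =>
    rw [psi_succ]
    have hz0 : 0 ≤ zfun K p kbar u k j := zfun_nonneg K p kbar hp hkpos u hunn k j
    have hd : 0 ≤ u k j - u k (j+1) := by have := humono k hk j; linarith
    have h1 : 0 ≤ u k (j+1) := hunn k hk (j+1)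
    have h2 : 0 ≤ u k (j+2) := hunn k hk (j+2)
    have h3 : u k (j+1) ≤ 1 := hule1 k hk (j+1)
    have hκ : 0 ≤ (1 + (kmax:ℝ)/kbar) := by positivity
    have hhm : hh * mu ≤ 1 := by nlinarith [mul_nonneg (mul_nonneg hh0 hx.le) hκ]
    nlinarith [mul_nonneg (mul_nonneg hh0 (mul_nonneg hx.le hd)) hz0,
      mul_nonneg h1 (sub_nonneg.mpr hhm),
      mul_nonneg (mul_nonneg hh0 hmu.le) h2]

lemma psi_le_one (hp : ∀ k ∈ K, 0 ≤ p k) (hpsum : ∑ k ∈ K, p k = 1)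
    (hkbar : kbar = ∑ k ∈ K, p k * (k : ℝ)) (hkpos : 0 < kbar)
    (hkmax : ∀ k ∈ K, k ≤ kmax)
    (hx : 0 < xcl) (hmu : 0 < mu) (hh0 : 0 ≤ hh)
    (hh1 : hh * (mu + xcl * (1 + (kmax:ℝ)/kbar)) ≤ 1)
    (u : ℕ → ℕ → ℝ)
    (humono : ∀ k ∈ K, ∀ i, u k (i+1) ≤ u k i)
    (hunn : ∀ k ∈ K, ∀ i, 0 ≤ u k i)
    (hule1 : ∀ k ∈ K, ∀ i, u k i ≤ 1) :
    ∀ k ∈ K, ∀ i, psi K p kbar xcl mu hh u k i ≤ 1 := by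
  intro k hk i
  match i with
  | 0 => norm_num [psi_zero]
  | Nat.succ j =>
    rw [psi_succ]
    have hz0 : 0 ≤ zfun K p kbar u k j := zfun_nonneg K p kbar hp hkpos u hunn k j
    have hzκ : zfun K p kbar u k j ≤ 1 + (kmax:ℝ)/kbar :=
      zfun_le K p kbar hp hpsum hkbar hkpos kmax hkmax u hule1 hunn k hk j
    have hcoef : 0 ≤ 1 - hh*mu - hh*xcl*(zfun K p kbar u k j) := by
      nlinarith [mul_nonneg (mul_nonneg hh0 hx.le) (sub_nonneg.mpr hzκ)]
    have h1 : u k (j+1) ≤ 1 := hule1 k hk (j+1)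
    have h2 : u k (j+2) ≤ 1 := hule1 k hk (j+2)
    have h3 : u k j ≤ 1 := hule1 k hk j
    nlinarith [mul_nonneg (sub_nonneg.mpr h1) hcoef,
      mul_nonneg (mul_nonneg (mul_nonneg hh0 hx.le) hz0) (sub_nonneg.mpr h3),
      mul_nonneg (mul_nonneg hh0 hmu.le) (sub_nonneg.mpr h2)]

lemma psi_mono_i (hp : ∀ k ∈ K, 0 ≤ p k) (hpsum : ∑ k ∈ K, p k = 1)
    (hkbar : kbar = ∑ k ∈ K, p k * (k : ℝ)) (hkpos : 0 < kbar)
    (hkmax : ∀ k ∈ K, k ≤ kmax)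
    (hx : 0 < xcl) (hmu : 0 < mu) (hh0 : 0 ≤ hh)
    (hh1 : hh * (mu + xcl * (1 + (kmax:ℝ)/kbar)) ≤ 1)
    (u : ℕ → ℕ → ℝ)
    (humono : ∀ k ∈ K, ∀ i, u k (i+1) ≤ u k i)
    (hunn : ∀ k ∈ K, ∀ i, 0 ≤ u k i)
    (hule1 : ∀ k ∈ K, ∀ i, u k i ≤ 1) :
    ∀ k ∈ K, ∀ i, psi K p kbar xcl mu hh u k (i+1) ≤ psi K p kbar xcl mu hh u k i := by
  intro k hk i
  match i with
  | 0 =>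
    rw [psi_zero]
    exact psi_le_one K p kbar xcl mu hh kmax hp hpsum hkbar hkpos hkmax hx hmu hh0 hh1
      u humono hunn hule1 k hk 1
  | Nat.succ j =>
    rw [psi_succ, psi_succ]
    have hz0 : 0 ≤ zfun K p kbar u k j := zfun_nonneg K p kbar hp hkpos u hunn k j
    have hz1 : 0 ≤ zfun K p kbar u k (j+1) := zfun_nonneg K p kbar hp hkpos u hunn k (j+1)
    have hzκ : zfun K p kbar u k (j+1) ≤ 1 + (kmax:ℝ)/kbar :=
      zfun_le K p kbar hp hpsum hkbar hkpos kmax hkmax u hule1 hunn k hk (j+1)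
    have hcoef : 0 ≤ 1 - hh*mu - hh*xcl*(zfun K p kbar u k (j+1)) := by
      nlinarith [mul_nonneg (mul_nonneg hh0 hx.le) (sub_nonneg.mpr hzκ)]
    have hd0 : 0 ≤ u k j - u k (j+1) := by have := humono k hk j; linarith
    have hd1 : 0 ≤ u k (j+1) - u k (j+2) := by have := humono k hk (j+1); linarith
    have hd2 : 0 ≤ u k (j+2) - u k (j+3) := by have := humono k hk (j+2); linarith
    nlinarith [mul_nonneg (sub_nonneg.mpr (humono k hk (j+1))) hcoef,
      mul_nonneg (mul_nonneg (mul_nonneg hh0 hx.le) hd0) hz0,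
      mul_nonneg (mul_nonneg hh0 hmu.le) hd2]

end PsiProps

section PsiProps2

variable (K : Finset ℕ) (p : ℕ → ℝ) (kbar : ℝ) (xcl mu hh : ℝ) (kmax : ℕ)

lemma psi_order (hp : ∀ k ∈ K, 0 ≤ p k) (hpsum : ∑ k ∈ K, p k = 1)
    (hkbar : kbar = ∑ k ∈ K, p k * (k : ℝ)) (hkpos : 0 < kbar)
    (hkmax : ∀ k ∈ K, k ≤ kmax)
    (hx : 0 < xcl) (hmu : 0 < mu) (hh0 : 0 ≤ hh)
    (hh1 : hh * (mu + xcl * (1 + (kmax:ℝ)/kbar)) ≤ 1)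
    (u v : ℕ → ℕ → ℝ)
    (hvmono : ∀ k ∈ K, ∀ i, v k (i+1) ≤ v k i)
    (hunn : ∀ k ∈ K, ∀ i, 0 ≤ u k i)
    (hule1 : ∀ k ∈ K, ∀ i, u k i ≤ 1)
    (huv : ∀ k ∈ K, ∀ i, u k i ≤ v k i) :
    ∀ k ∈ K, ∀ i, psi K p kbar xcl mu hh u k i ≤ psi K p kbar xcl mu hh v k i := by
  intro k hk i
  match i with
  | 0 => rw [psi_zero, psi_zero]
  | Nat.succ j =>
    rw [psi_succ, psi_succ]
    have hz0 : 0 ≤ zfun K p kbar u k j := zfun_nonneg K p kbar hp hkpos u hunn k j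
    have hzκ : zfun K p kbar u k j ≤ 1 + (kmax:ℝ)/kbar :=
      zfun_le K p kbar hp hpsum hkbar hkpos kmax hkmax u hule1 hunn k hk j
    have hzuv : zfun K p kbar u k j ≤ zfun K p kbar v k j :=
      zfun_mono K p kbar hp hkpos u v huv k j
    have hvd : 0 ≤ v k j - v k (j+1) := by have := hvmono k hk j; linarith
    have e0 : u k j ≤ v k j := huv k hk j
    have e1 : u k (j+1) ≤ v k (j+1) := huv k hk (j+1)
    have e2 : u k (j+2) ≤ v k (j+2) := huv k hk (j+2)
    nlinarith [mul_nonneg (mul_nonneg hh0 hx.le) (mul_nonneg hvd (sub_nonneg.mpr hzuv)),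
      mul_nonneg (mul_nonneg hh0 hx.le) (mul_nonneg (sub_nonneg.mpr e0) hz0),
      mul_nonneg (sub_nonneg.mpr e1) (by nlinarith [mul_nonneg (mul_nonneg hh0 hx.le) (sub_nonneg.mpr hzκ)] :
        (0:ℝ) ≤ 1 - hh*mu - hh*xcl*(zfun K p kbar u k j)),
      mul_nonneg (mul_nonneg hh0 hmu.le) (sub_nonneg.mpr e2)]

lemma psi_fix (u : ℕ → ℕ → ℝ) (hu0 : ∀ k ∈ K, u k 0 = 1)
    (hustat : ∀ k ∈ K, ∀ i : ℕ,
      xcl * (u k i - u k (i+1)) * zfun K p kbar u k i - mu * (u k (i+1) - u k (i+2)) = 0) :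
    ∀ k ∈ K, ∀ i, psi K p kbar xcl mu hh u k i = u k i := by
  intro k hk i
  match i with
  | 0 => rw [psi_zero, hu0 k hk]
  | Nat.succ j => rw [psi_succ, hustat k hk j]; ring

lemma psi_min_le (hp : ∀ k ∈ K, 0 ≤ p k) (hkpos : 0 < kbar)
    (hx : 0 < xcl) (hmu : 0 < mu) (hh0 : 0 ≤ hh)
    (s t : ℕ → ℕ → ℝ)
    (hs0 : ∀ k, s k 0 = 1) (hsmono : ∀ k i, s k (i+1) ≤ s k i)
    (hsnn : ∀ k i, 0 ≤ s k i)
    (ht0 : ∀ k, t k 0 = 1) (htmono : ∀ k i, t k (i+1) ≤ t k i)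
    (htnn : ∀ k i, 0 ≤ t k i)
    (hsstat : ∀ k ∈ K, ∀ i : ℕ,
      xcl * (s k i - s k (i+1)) * zfun K p kbar s k i - mu * (s k (i+1) - s k (i+2)) = 0)
    (htstat : ∀ k ∈ K, ∀ i : ℕ,
      xcl * (t k i - t k (i+1)) * zfun K p kbar t k i - mu * (t k (i+1) - t k (i+2)) = 0) :
    ∀ k ∈ K, ∀ i, psi K p kbar xcl mu hh (fun k i => min (s k i) (t k i)) k i
      ≤ min (s k i) (t k i) := by
  intro k hk i
  set m : ℕ → ℕ → ℝ := fun k i => min (s k i) (t k i) with hm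
  have hmnn : ∀ k' ∈ K, ∀ i, 0 ≤ m k' i := by
    intro k' _ i
    exact le_min (hsnn k' i) (htnn k' i)
  have key : ∀ (i : ℕ) (w : ℕ → ℕ → ℝ), (∀ k' ∈ K, ∀ i', m k' i' ≤ w k' i') →
      (∀ i', 0 ≤ w k i') →
      (xcl * (w k i - w k (i+1)) * zfun K p kbar w k i - mu * (w k (i+1) - w k (i+2)) = 0) →
      (m k (i+1) = w k (i+1)) →
      psi K p kbar xcl mu hh m k (i+1) ≤ m k (i+1) := by
    intro i w hmw hwnn hwstat hmeq
    rw [psi_succ]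
    have hzm0 : 0 ≤ zfun K p kbar m k i := zfun_nonneg K p kbar hp hkpos m hmnn k i
    have hzmw : zfun K p kbar m k i ≤ zfun K p kbar w k i :=
      zfun_mono K p kbar hp hkpos m w hmw k i
    have hmd : 0 ≤ m k i - m k (i+1) := by
      have h1 : m k (i+1) ≤ s k (i+1) := min_le_left _ _
      have h2 : m k (i+1) ≤ t k (i+1) := min_le_right _ _
      have : m k (i+1) ≤ m k i := by
        apply le_min
        · exact le_trans h1 (hsmono k i)
        · exact le_trans h2 (htmono k i)
      linarith
    have hdle : m k i - m k (i+1) ≤ w k i - w k (i+1) := by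
      have h3 := hmw k hk i
      rw [hmeq] at *
      linarith
    have hz0w : 0 ≤ zfun K p kbar w k i := zfun_nonneg K p kbar hp hkpos w
      (fun k' hk' i' => by
        have := hmw k' hk' i'
        have := hmnn k' hk' i'
        linarith) k i
    have step1 : xcl * (m k i - m k (i+1)) * zfun K p kbar m k i
        ≤ xcl * (w k i - w k (i+1)) * zfun K p kbar w k i := by
      have h1 : 0 ≤ (m k i - m k (i+1)) * (zfun K p kbar w k i - zfun K p kbar m k i) :=
        mul_nonneg hmd (sub_nonneg.mpr hzmw)
      have h2 : 0 ≤ ((w k i - w k (i+1)) - (m k i - m k (i+1))) * zfun K p kbar w k i :=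
        mul_nonneg (by linarith) hz0w
      nlinarith [mul_nonneg hx.le (by nlinarith [h1, h2] :
        (0:ℝ) ≤ (w k i - w k (i+1)) * zfun K p kbar w k i
          - (m k i - m k (i+1)) * zfun K p kbar m k i)]
    have step2 : mu * (w k (i+1) - w k (i+2)) ≤ mu * (m k (i+1) - m k (i+2)) := by
      have h2 : m k (i+2) ≤ w k (i+2) := hmw k hk (i+2)
      have h3 : w k (i+1) = m k (i+1) := hmeq.symm
      nlinarith
    have hbr : xcl * (m k i - m k (i+1)) * zfun K p kbar m k i
        - mu * (m k (i+1) - m k (i+2)) ≤ 0 := by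
      linarith [hwstat]
    nlinarith [mul_nonneg hh0 (neg_nonneg.mpr hbr)]
  match i with
  | 0 =>
    rw [psi_zero]
    simp [hs0 k, ht0 k]
  | Nat.succ j =>
    rcases le_total (s k (j+1)) (t k (j+1)) with hcase | hcase
    · exact key j s (fun k' _ i' => min_le_left _ _) (fun i' => hsnn k i') (hsstat k hk j)
        (min_eq_left hcase)
    · exact key j t (fun k' _ i' => min_le_right _ _) (fun i' => htnn k i') (htstat k hk j)
        (min_eq_right hcase)

/-- The graph mean field model has at most one stationary point in the state space. -/
theorem stationary_point_unique (K : Finset ℕ) (p : ℕ → ℝ)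
    (hp : ∀ k ∈ K, 0 ≤ p k) (hpsum : ∑ k ∈ K, p k = 1)
    (kbar : ℝ) (hkbar : kbar = ∑ k ∈ K, p k * (k : ℝ)) (hkpos : 0 < kbar)
    (kmax : ℕ) (hkmaxmem : kmax ∈ K) (hkmax : ∀ k ∈ K, k ≤ kmax)
    (xcl mu : ℝ) (hx : 0 < xcl) (hmu : 0 < mu)
    (hstab : (1 + (kmax : ℝ) / kbar) / 2 * (xcl / mu) < 1)
    (s t : ℕ → ℕ → ℝ)
    (hs0 : ∀ k, s k 0 = 1) (hsmono : ∀ k i, s k (i+1) ≤ s k i)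
    (hsnn : ∀ k i, 0 ≤ s k i) (hsle1 : ∀ k i, s k i ≤ 1)
    (hslim : ∀ k ∈ K, Filter.Tendsto (fun i => s k i) Filter.atTop (nhds 0))
    (ht0 : ∀ k, t k 0 = 1) (htmono : ∀ k i, t k (i+1) ≤ t k i)
    (htnn : ∀ k i, 0 ≤ t k i) (htle1 : ∀ k i, t k i ≤ 1)
    (htlim : ∀ k ∈ K, Filter.Tendsto (fun i => t k i) Filter.atTop (nhds 0))
    (hsstat : ∀ k ∈ K, ∀ i : ℕ,
      xcl * (s k i - s k (i+1)) * zfun K p kbar s k i - mu * (s k (i+1) - s k (i+2)) = 0)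
    (htstat : ∀ k ∈ K, ∀ i : ℕ,
      xcl * (t k i - t k (i+1)) * zfun K p kbar t k i - mu * (t k (i+1) - t k (i+2)) = 0) :
    ∀ k ∈ K, ∀ i : ℕ, s k i = t k i := by
  have hκpos : (0:ℝ) < mu + xcl * (1 + (kmax:ℝ)/kbar) := by positivity
  set hh : ℝ := (mu + xcl * (1 + (kmax:ℝ)/kbar))⁻¹ with hhdef
  have hhpos : 0 < hh := by positivity
  have hh0 : 0 ≤ hh := hhpos.le
  have hh1 : hh * (mu + xcl * (1 + (kmax:ℝ)/kbar)) ≤ 1 := by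
    rw [hhdef, inv_mul_cancel₀ (ne_of_gt hκpos)]
  set m : ℕ → ℕ → ℝ := fun k i => min (s k i) (t k i) with hm
  set F : (ℕ → ℕ → ℝ) → (ℕ → ℕ → ℝ) := psi K p kbar xcl mu hh with hF
  set it : ℕ → ℕ → ℕ → ℝ := fun n => F^[n] m with hit
  have hitsucc : ∀ n, it (n+1) = F (it n) := fun n => Function.iterate_succ_apply' F n m
  have hm0 : ∀ k, m k 0 = 1 := fun k => by simp [hm, hs0 k, ht0 k]
  have hmmono : ∀ k i, m k (i+1) ≤ m k i := fun k i =>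
    le_min (le_trans (min_le_left _ _) (hsmono k i)) (le_trans (min_le_right _ _) (htmono k i))
  have hmnn : ∀ k i, 0 ≤ m k i := fun k i => le_min (hsnn k i) (htnn k i)
  have hmle1 : ∀ k i, m k i ≤ 1 := fun k i => le_trans (min_le_left _ _) (hsle1 k i)
  have main : ∀ n, (∀ k ∈ K, it n k 0 = 1) ∧ (∀ k ∈ K, ∀ i, it n k (i+1) ≤ it n k i)
      ∧ (∀ k ∈ K, ∀ i, 0 ≤ it n k i) ∧ (∀ k ∈ K, ∀ i, it n k i ≤ 1)
      ∧ (∀ k ∈ K, ∀ i, it (n+1) k i ≤ it n k i)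
      ∧ (∀ k ∈ K, ∀ i, it n k i ≤ s k i) ∧ (∀ k ∈ K, ∀ i, it n k i ≤ t k i) := by
    intro n
    induction n with
    | zero =>
      have hdec : ∀ k ∈ K, ∀ i, it 1 k i ≤ it 0 k i := by
        intro k hk i
        rw [hitsucc 0]
        exact psi_min_le K p kbar xcl mu hh hp hkpos hx hmu hh0 s t hs0 hsmono hsnn
          ht0 htmono htnn hsstat htstat k hk i
      exact ⟨fun k _ => hm0 k, fun k _ i => hmmono k i, fun k _ i => hmnn k i,
        fun k _ i => hmle1 k i, hdec, fun k _ i => min_le_left _ _, fun k _ i => min_le_right _ _⟩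
    | succ n ih =>
      obtain ⟨ih0, ihmono, ihnn, ihle1, ihdec, ihs, iht⟩ := ih
      have h0' : ∀ k ∈ K, it (n+1) k 0 = 1 := by
        intro k hk; rw [hitsucc n]; exact psi_zero K p kbar xcl mu hh (it n) k
      have hmono' : ∀ k ∈ K, ∀ i, it (n+1) k (i+1) ≤ it (n+1) k i := by
        intro k hk i; rw [hitsucc n]
        exact psi_mono_i K p kbar xcl mu hh kmax hp hpsum hkbar hkpos hkmax hx hmu hh0 hh1
          (it n) ihmono ihnn ihle1 k hk i
      have hnn' : ∀ k ∈ K, ∀ i, 0 ≤ it (n+1) k i := by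
        intro k hk i; rw [hitsucc n]
        exact psi_nonneg K p kbar xcl mu hh kmax hp hpsum hkbar hkpos hkmax hx hmu hh0 hh1
          (it n) ihmono ihnn ihle1 k hk i
      have hle1' : ∀ k ∈ K, ∀ i, it (n+1) k i ≤ 1 := by
        intro k hk i; rw [hitsucc n]
        exact psi_le_one K p kbar xcl mu hh kmax hp hpsum hkbar hkpos hkmax hx hmu hh0 hh1
          (it n) ihmono ihnn ihle1 k hk i
      have hdec' : ∀ k ∈ K, ∀ i, it (n+2) k i ≤ it (n+1) k i := by
        intro k hk i
        have h2 := psi_order K p kbar xcl mu hh kmax hp hpsum hkbar hkpos hkmax hx hmu hh0 hh1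
          (it (n+1)) (it n) ihmono hnn' hle1' ihdec k hk i
        calc it (n+2) k i = F (it (n+1)) k i := by rw [hitsucc (n+1)]
          _ ≤ F (it n) k i := h2
          _ = it (n+1) k i := by rw [← hitsucc n]
      have hs' : ∀ k ∈ K, ∀ i, it (n+1) k i ≤ s k i := by
        intro k hk i
        rw [hitsucc n]
        calc psi K p kbar xcl mu hh (it n) k i
            ≤ psi K p kbar xcl mu hh s k i :=
              psi_order K p kbar xcl mu hh kmax hp hpsum hkbar hkpos hkmax hx hmu hh0 hh1
                (it n) s (fun k _ i => hsmono k i) ihnn ihle1 ihs k hk i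
          _ = s k i := psi_fix K p kbar xcl mu hh s (fun k _ => hs0 k) hsstat k hk i
      have ht' : ∀ k ∈ K, ∀ i, it (n+1) k i ≤ t k i := by
        intro k hk i
        rw [hitsucc n]
        calc psi K p kbar xcl mu hh (it n) k i
            ≤ psi K p kbar xcl mu hh t k i :=
              psi_order K p kbar xcl mu hh kmax hp hpsum hkbar hkpos hkmax hx hmu hh0 hh1
                (it n) t (fun k _ i => htmono k i) ihnn ihle1 iht k hk i
          _ = t k i := psi_fix K p kbar xcl mu hh t (fun k _ => ht0 k) htstat k hk i
      exact ⟨h0', hmono', hnn', hle1', hdec', hs', ht'⟩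
  set w : ℕ → ℕ → ℝ := fun k i => ⨅ n, it n k i with hw
  have hbdd : ∀ k ∈ K, ∀ i, BddBelow (Set.range (fun n => it n k i)) := by
    intro k hk i
    refine ⟨0, ?_⟩
    rintro x ⟨n, rfl⟩
    exact (main n).2.2.1 k hk i
  have htend : ∀ k ∈ K, ∀ i, Filter.Tendsto (fun n => it n k i) atTop (nhds (w k i)) := by
    intro k hk i
    exact tendsto_atTop_ciInf (antitone_nat_of_succ_le (fun n => (main n).2.2.2.2.1 k hk i))
      (hbdd k hk i)
  have hw0 : ∀ k ∈ K, w k 0 = 1 := by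
    intro k hk
    have hconst : (fun n => it n k 0) = fun _ => (1:ℝ) := funext (fun n => (main n).1 k hk)
    rw [hw]
    simp only []
    rw [show (⨅ n, it n k 0) = ⨅ n : ℕ, (1:ℝ) by rw [hconst]]
    exact ciInf_const
  have hwnn : ∀ k ∈ K, ∀ i, 0 ≤ w k i := by
    intro k hk i
    exact le_ciInf (fun n => (main n).2.2.1 k hk i)
  have hws : ∀ k ∈ K, ∀ i, w k i ≤ s k i := by
    intro k hk i
    exact le_trans (ciInf_le (hbdd k hk i) 0) ((main 0).2.2.2.2.2.1 k hk i)
  have hwt : ∀ k ∈ K, ∀ i, w k i ≤ t k i := by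
    intro k hk i
    exact le_trans (ciInf_le (hbdd k hk i) 0) ((main 0).2.2.2.2.2.2 k hk i)
  have hwlim : ∀ k ∈ K, Filter.Tendsto (fun i => w k i) atTop (nhds 0) := by
    intro k hk
    exact squeeze_zero (fun i => hwnn k hk i) (fun i => hws k hk i) (hslim k hk)
  have hwstat : ∀ k ∈ K, ∀ i : ℕ,
      xcl * (w k i - w k (i+1)) * zfun K p kbar w k i - mu * (w k (i+1) - w k (i+2)) = 0 := by
    intro k hk i
    have zlim : Filter.Tendsto (fun n => zfun K p kbar (it n) k i) atTop
        (nhds (zfun K p kbar w k i)) := by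
      unfold zfun
      apply Filter.Tendsto.const_mul
      apply tendsto_finset_sum
      intro k' hk'
      exact ((htend k' hk' i).add (htend k' hk' (i+1))).const_mul _
    have l1 : Filter.Tendsto (fun n => it (n+1) k (i+1)) atTop (nhds (w k (i+1))) :=
      (htend k hk (i+1)).comp (tendsto_nat_shift (fun n => n+1) (fun n => by show n ≤ n+1; omega))
    have l2 : Filter.Tendsto (fun n => it n k (i+1) + hh * (xcl * (it n k i - it n k (i+1))
            * zfun K p kbar (it n) k i - mu * (it n k (i+1) - it n k (i+2)))) atTop
        (nhds (w k (i+1) + hh * (xcl * (w k i - w k (i+1)) * zfun K p kbar w k i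
            - mu * (w k (i+1) - w k (i+2))))) := by
      apply Filter.Tendsto.add (htend k hk (i+1))
      apply Filter.Tendsto.const_mul
      apply Filter.Tendsto.sub
      · exact (((htend k hk i).sub (htend k hk (i+1))).const_mul xcl).mul zlim
      · exact ((htend k hk (i+1)).sub (htend k hk (i+2))).const_mul mu
    have leq : ∀ n, it (n+1) k (i+1) = it n k (i+1) + hh * (xcl * (it n k i - it n k (i+1))
        * zfun K p kbar (it n) k i - mu * (it n k (i+1) - it n k (i+2))) := by
      intro n
      rw [hitsucc n]
      rfl
    have huniq := tendsto_nhds_unique l1 (Filter.Tendsto.congr (fun n => (leq n).symm) l2)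
    have hE : hh * (xcl * (w k i - w k (i+1)) * zfun K p kbar w k i
        - mu * (w k (i+1) - w k (i+2))) = 0 := by linarith
    rcases mul_eq_zero.mp hE with h' | h'
    · exact absurd h' (ne_of_gt hhpos)
    · exact h'
  intro k hk i
  have e1 := comparable_eq K p hp kbar xcl mu hmu w s hw0 (fun k _ => hs0 k) hwlim hslim
    hwstat hsstat hws k hk i
  have e2 := comparable_eq K p hp kbar xcl mu hmu w t hw0 (fun k _ => ht0 k) hwlim htlim
    hwstat htstat hwt k hk i
  exact e1.symm.trans e2
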